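/- With notation as above, if s ≤ s^J(I) (the limit of μ_J^I(p^e)/p^e), then h_s(I,J;M) = (s^d/d!)·e(I;M); and if s ≥ c^J(I) (the F-threshold), then h_s(I,J;M) = e_HK(J;M). -/

import Mathlib

open Filter

/-- The `q`-th Frobenius power of an ideal: the ideal generated by `q`-th powers of
elements of `J`. -/
def frobPow {R : Type*} [CommRing R] (J : Ideal R) (q : ℕ) : Ideal R :=
  Ideal.span ((fun x => x ^ q) '' (J : Set R))

/-- The length of the `R`-module `M/NM` (as a real number), where length is the
supremum of lengths of chains of submodules of `M/NM`. -/
noncomputable def quotLen (R M : Type*) [CommRing R] [AddCommGroup M] [Module R M]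
    (N : Ideal R) : ℝ :=
  (((Order.krullDim (Submodule R (M ⧸ (N • (⊤ : Submodule R M))))).unbotD 0).toNat : ℝ)



section Comb

variable {α β : Type*} [PartialOrder α] [PartialOrder β]

lemma exists_two_series (u : ℕ → α) (v : ℕ → β) (hu : Monotone u) (hv : Monotone v) (n : ℕ)
    (hstep : ∀ i < n, u i < u (i + 1) ∨ v i < v (i + 1)) :
    ∃ (a : LTSeries α) (b : LTSeries β),
      a.last = u n ∧ b.last = v n ∧ n ≤ a.length + b.length := by
  induction n with
  | zero =>
      exact ⟨RelSeries.singleton _ (u 0), RelSeries.singleton _ (v 0), by simp, by simp, by simp⟩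
  | succ n ih =>
      obtain ⟨a, b, ha, hb, hn⟩ := ih (fun i hi => hstep i (by omega))
      rcases hstep n (by omega) with h | h
      · rcases (hv (Nat.le_succ n)).lt_or_eq with h' | h'
        · exact ⟨a.snoc (u (n + 1)) (ha ▸ h), b.snoc (v (n + 1)) (hb ▸ h'),
            by simp, by simp, by simp [RelSeries.snoc_length]; omega⟩
        · exact ⟨a.snoc (u (n + 1)) (ha ▸ h), b, by simp, hb.trans h',
            by simp [RelSeries.snoc_length]; omega⟩
      · rcases (hu (Nat.le_succ n)).lt_or_eq with h' | h'
        · exact ⟨a.snoc (u (n + 1)) (ha ▸ h'), b.snoc (v (n + 1)) (hb ▸ h),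
            by simp, by simp, by simp [RelSeries.snoc_length]; omega⟩
        · exact ⟨a, b.snoc (v (n + 1)) (hb ▸ h), ha.trans h', by simp,
            by simp [RelSeries.snoc_length]; omega⟩

end Comb

section Modular

variable {R : Type*} [Ring R] {P : Type*} [AddCommGroup P] [Module R P]

lemma comap_lt_or_map_lt (N : Submodule R P) {x y : Submodule R P} (hxy : x < y) :
    Submodule.comap N.subtype x < Submodule.comap N.subtype y ∨
      Submodule.map N.mkQ x < Submodule.map N.mkQ y := by
  by_contra hc
  push_neg at hc
  obtain ⟨h1, h2⟩ := hc
  have e1 : Submodule.comap N.subtype x = Submodule.comap N.subtype y :=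
    ((Submodule.comap_mono hxy.le).lt_or_eq).resolve_left h1
  have e2 : Submodule.map N.mkQ x = Submodule.map N.mkQ y :=
    ((Submodule.map_mono hxy.le).lt_or_eq).resolve_left h2
  have e1' : N ⊓ x = N ⊓ y := by
    rw [← Submodule.map_comap_subtype, e1, Submodule.map_comap_subtype]
  have e2' : N ⊔ x = N ⊔ y := by
    rw [← Submodule.comap_map_mkQ, e2, Submodule.comap_map_mkQ]
  have : x = y := by
    calc x = x ⊔ (N ⊓ x) := (sup_eq_left.mpr inf_le_right).symm
      _ = x ⊔ (N ⊓ y) := by rw [e1']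
      _ = (x ⊔ N) ⊓ y := (sup_inf_assoc_of_le N hxy.le).symm
      _ = (y ⊔ N) ⊓ y := by rw [sup_comm x N, e2', sup_comm]
      _ = y := inf_eq_right.mpr le_sup_left
  exact hxy.ne this
end Modular
section Flen

open Order

variable (R : Type*) [Ring R]

/-- length of a module, as a natural number (junk value if infinite). -/
noncomputable def flen (P : Type*) [AddCommGroup P] [Module R P] : ℕ :=
  ((Order.krullDim (Submodule R P)).unbotD 0).toNat

variable {R}
variable {P Q : Type*} [AddCommGroup P] [Module R P] [AddCommGroup Q] [Module R Q]

lemma kd_le_add (N : Submodule R P) :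
    krullDim (Submodule R P) ≤
      krullDim (Submodule R N) + krullDim (Submodule R (P ⧸ N)) := by
  refine iSup_le fun c => ?_
  set n := c.length with hn
  have hclamp : ∀ i : ℕ, min i n < n + 1 := fun i => by omega
  set uc : ℕ → Submodule R N :=
    fun i => Submodule.comap N.subtype (c ⟨min i n, hclamp i⟩) with huc
  set vc : ℕ → Submodule R (P ⧸ N) :=
    fun i => Submodule.map N.mkQ (c ⟨min i n, hclamp i⟩) with hvc
  have hmono : ∀ i j : ℕ, i ≤ j →
      (⟨min i n, hclamp i⟩ : Fin (n+1)) ≤ ⟨min j n, hclamp j⟩ := by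
    intro i j hij; simp only [Fin.mk_le_mk]; omega
  have hu : Monotone uc := fun i j hij =>
    Submodule.comap_mono (c.monotone (hmono i j hij))
  have hv : Monotone vc := fun i j hij =>
    Submodule.map_mono (c.monotone (hmono i j hij))
  have hstep : ∀ i < n, uc i < uc (i + 1) ∨ vc i < vc (i + 1) := by
    intro i hi
    have hlt : (⟨min i n, hclamp i⟩ : Fin (n+1)) < ⟨min (i+1) n, hclamp (i+1)⟩ := by
      simp only [Fin.mk_lt_mk]; omega
    exact comap_lt_or_map_lt N (c.strictMono hlt)
  obtain ⟨a, b, -, -, hab⟩ := exists_two_series uc vc hu hv n hstep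
  calc (c.length : WithBot ℕ∞) ≤ ((a.length + b.length : ℕ) : WithBot ℕ∞) := by
        exact_mod_cast hab
    _ = (a.length : WithBot ℕ∞) + (b.length : WithBot ℕ∞) := by push_cast; rfl
    _ ≤ _ := add_le_add (Order.LTSeries.length_le_krullDim a) (Order.LTSeries.length_le_krullDim b)

lemma chain_bound {P : Type*} [AddCommGroup P] [Module R P] (hP : IsFiniteLength R P) :
    ∃ n : ℕ, ∀ c : LTSeries (Submodule R P), c.length ≤ n := by
  induction hP with
  | of_subsingleton =>
      refine ⟨0, fun c => ?_⟩
      by_contra hc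
      have h01 : (⟨0, by omega⟩ : Fin (c.length + 1)) < ⟨1, by omega⟩ :=
        Fin.mk_lt_mk.mpr (by omega)
      exact absurd (Subsingleton.elim _ _) (c.strictMono h01).ne
  | @of_simple_quotient P _ _ N _ _ ih =>
      obtain ⟨n, hn⟩ := ih
      refine ⟨n + 1, fun c => ?_⟩
      set m := c.length with hm
      have hclamp : ∀ i : ℕ, min i m < m + 1 := fun i => by omega
      set uc : ℕ → Submodule R N :=
        fun i => Submodule.comap N.subtype (c ⟨min i m, hclamp i⟩) with huc
      set vc : ℕ → Submodule R (P ⧸ N) :=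
        fun i => Submodule.map N.mkQ (c ⟨min i m, hclamp i⟩) with hvc
      have hmono : ∀ i j : ℕ, i ≤ j →
          (⟨min i m, hclamp i⟩ : Fin (m+1)) ≤ ⟨min j m, hclamp j⟩ := by
        intro i j hij; simp only [Fin.mk_le_mk]; omega
      have hu : Monotone uc := fun i j hij =>
        Submodule.comap_mono (c.monotone (hmono i j hij))
      have hv : Monotone vc := fun i j hij =>
        Submodule.map_mono (c.monotone (hmono i j hij))
      have hstep : ∀ i < m, uc i < uc (i + 1) ∨ vc i < vc (i + 1) := by
        intro i hi
        have hlt : (⟨min i m, hclamp i⟩ : Fin (m+1)) < ⟨min (i+1) m, hclamp (i+1)⟩ := by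
          simp only [Fin.mk_lt_mk]; omega
        exact comap_lt_or_map_lt N (c.strictMono hlt)
      obtain ⟨a, b, -, -, hab⟩ := exists_two_series uc vc hu hv m hstep
      have hb1 : b.length ≤ 1 := by
        by_contra hb
        have h01 : (⟨0, by omega⟩ : Fin (b.length + 1)) < ⟨1, by omega⟩ :=
          Fin.mk_lt_mk.mpr (by omega)
        have h12 : (⟨1, by omega⟩ : Fin (b.length + 1)) < ⟨2, by omega⟩ :=
          Fin.mk_lt_mk.mpr (by omega)
        have l1 := b.strictMono h01
        have l2 := b.strictMono h12
        rcases eq_bot_or_eq_top (b ⟨1, by omega⟩) with h | h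
        · rw [h] at l1; exact absurd l1 (by simp)
        · rw [h] at l2; exact absurd l2 (by simp)
      exact hm ▸ (hab.trans (by have := hn a; omega))

end Flen
section Flen2

open Order

variable {R : Type*} [Ring R] {P Q : Type*} [AddCommGroup P] [Module R P]
  [AddCommGroup Q] [Module R Q]

lemma kd_eq_flen [IsNoetherian R P] [IsArtinian R P] :
    krullDim (Submodule R P) = ((flen R P : ℕ∞) : WithBot ℕ∞) := by
  obtain ⟨n, hn⟩ := chain_bound
    (isFiniteLength_iff_isNoetherian_isArtinian.mpr ⟨‹_›, ‹_›⟩ : IsFiniteLength R P)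
  have hle : krullDim (Submodule R P) ≤ (n : WithBot ℕ∞) := by
    refine iSup_le fun c => ?_
    exact_mod_cast hn c
  have hge : (0 : WithBot ℕ∞) ≤ krullDim (Submodule R P) := krullDim_nonneg
  obtain ⟨m, hm⟩ : ∃ m : ℕ∞, krullDim (Submodule R P) = (m : WithBot ℕ∞) := by
    cases h : krullDim (Submodule R P) with
    | bot => rw [h] at hge; exact absurd hge (by simp)
    | coe m => exact ⟨m, rfl⟩
  obtain ⟨k, hk⟩ : ∃ k : ℕ, m = (k : ℕ∞) := by
    rw [hm] at hle
    have : m ≤ (n : ℕ∞) := by exact_mod_cast hle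
    lift m to ℕ using (this.trans_lt (WithTop.coe_lt_top n)).ne
    exact ⟨m, rfl⟩
  have : flen R P = k := by
    unfold flen
    rw [hm, hk]
    simp [WithBot.unbotD_coe]
  rw [this, hm, hk]

lemma length_le_flen [IsNoetherian R P] [IsArtinian R P] (c : LTSeries (Submodule R P)) :
    c.length ≤ flen R P := by
  have := Order.LTSeries.length_le_krullDim c
  rw [kd_eq_flen] at this
  exact_mod_cast this

lemma exists_chain_flen [IsNoetherian R P] [IsArtinian R P] :
    ∃ c : LTSeries (Submodule R P), c.length = flen R P := by
  by_contra hc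
  push_neg at hc
  rcases Nat.eq_zero_or_pos (flen R P) with h0 | h0
  · exact hc (RelSeries.singleton _ ⊥) (by simpa using h0.symm)
  · obtain ⟨t, ht⟩ : ∃ t, flen R P = t + 1 := ⟨flen R P - 1, by omega⟩
    have hall : ∀ c : LTSeries (Submodule R P), c.length ≤ t := by
      intro c
      have := length_le_flen c
      have := hc c
      omega
    have h2 : krullDim (Submodule R P) ≤ ((t : ℕ∞) : WithBot ℕ∞) :=
      iSup_le fun c => by exact_mod_cast hall c
    rw [kd_eq_flen] at h2
    have : flen R P ≤ t := by exact_mod_cast h2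
    omega

lemma flen_congr (e : P ≃ₗ[R] Q) : flen R P = flen R Q := by
  unfold flen
  rw [Order.krullDim_eq_of_orderIso (Submodule.orderIsoMapComap e)]

lemma flen_le_of_injective [IsNoetherian R Q] [IsArtinian R Q] (f : P →ₗ[R] Q)
    (hf : Function.Injective f) : flen R P ≤ flen R Q := by
  haveI : IsNoetherian R P := isNoetherian_of_injective f hf
  haveI : IsArtinian R P := isArtinian_of_injective f hf
  obtain ⟨c, hc⟩ := (exists_chain_flen : ∃ c : LTSeries (Submodule R P), _)
  have hsm : StrictMono (Submodule.map f) := fun A B hAB => by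
    refine lt_of_le_of_ne (Submodule.map_mono hAB.le) (fun he => hAB.ne ?_)
    rw [← Submodule.comap_map_eq_of_injective hf A, ← Submodule.comap_map_eq_of_injective hf B, he]
  have := length_le_flen (c.map _ hsm)
  simpa [hc] using this

lemma flen_le_of_surjective [IsNoetherian R P] [IsArtinian R P] (f : P →ₗ[R] Q)
    (hf : Function.Surjective f) : flen R Q ≤ flen R P := by
  haveI : IsNoetherian R Q := isNoetherian_of_surjective f (LinearMap.range_eq_top.mpr hf)
  haveI : IsArtinian R Q := isArtinian_of_surjective P f hf
  obtain ⟨c, hc⟩ := (exists_chain_flen : ∃ c : LTSeries (Submodule R Q), _)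
  have hsm : StrictMono (Submodule.comap f) := fun A B hAB => by
    refine lt_of_le_of_ne (Submodule.comap_mono hAB.le) (fun he => hAB.ne ?_)
    rw [← Submodule.map_comap_eq_of_surjective hf A,
      ← Submodule.map_comap_eq_of_surjective hf B, he]
  have := length_le_flen (c.map _ hsm)
  simpa [hc] using this

lemma flen_add [IsNoetherian R P] [IsArtinian R P] (N : Submodule R P) :
    flen R N + flen R (P ⧸ N) = flen R P := by
  haveI : IsArtinian R (P ⧸ N) := isArtinian_of_surjective P N.mkQ N.mkQ_surjective
  refine le_antisymm ?_ ?_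
  · obtain ⟨a, ha⟩ := (exists_chain_flen : ∃ c : LTSeries (Submodule R N), _)
    obtain ⟨b, hb⟩ := (exists_chain_flen : ∃ c : LTSeries (Submodule R (P ⧸ N)), _)
    have hsma : StrictMono (Submodule.map N.subtype) := fun A B hAB => by
      refine lt_of_le_of_ne (Submodule.map_mono hAB.le) (fun he => hAB.ne ?_)
      rw [← Submodule.comap_map_eq_of_injective N.injective_subtype A,
        ← Submodule.comap_map_eq_of_injective N.injective_subtype B, he]
    have hsmb : StrictMono (Submodule.comap N.mkQ) := fun A B hAB => by
      refine lt_of_le_of_ne (Submodule.comap_mono hAB.le) (fun he => hAB.ne ?_)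
      rw [← Submodule.map_comap_eq_of_surjective N.mkQ_surjective A,
        ← Submodule.map_comap_eq_of_surjective N.mkQ_surjective B, he]
    set a' := a.map _ hsma with ha'
    set b' := b.map _ hsmb with hb'
    have hconn : a'.last ≤ b'.head := by
      have h1 : a'.last ≤ N := by
        rw [ha', LTSeries.last_map]
        exact Submodule.map_subtype_le N _
      have h2 : N ≤ b'.head := by
        rw [hb', LTSeries.head_map]
        intro x hx
        simp only [Submodule.mem_comap]
        have : N.mkQ x = 0 := by
          simpa [Submodule.mkQ_apply, Submodule.Quotient.mk_eq_zero] using hx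
        rw [this]
        exact Submodule.zero_mem _
      exact h1.trans h2
    have hla : a'.length = a.length := rfl
    have hlb : b'.length = b.length := rfl
    rcases hconn.lt_or_eq with h | h
    · have := length_le_flen (a'.append b' h)
      rw [RelSeries.append_length] at this
      omega
    · have := length_le_flen (a'.smash b' h)
      rw [RelSeries.smash_length] at this
      omega
  · have := kd_le_add N
    rw [kd_eq_flen, kd_eq_flen (P := N), kd_eq_flen (P := (P ⧸ N))] at this
    exact_mod_cast this

end Flen2
section Core

open Order

variable {R : Type*} [Ring R]

lemma flen_quot_ineq {W : Type*} [AddCommGroup W] [Module R W]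
    [IsNoetherian R W] [IsArtinian R W] (A B : Submodule R W) :
    flen R (W ⧸ B) + flen R (W ⧸ A) ≤ flen R (W ⧸ (A ⊔ B)) + flen R W := by
  haveI : IsArtinian R (W ⧸ B) := isArtinian_of_surjective _ B.mkQ B.mkQ_surjective
  have h1 := flen_add (P := W ⧸ B) (Submodule.map B.mkQ A)
  have h2 : flen R ((W ⧸ B) ⧸ (Submodule.map B.mkQ A)) = flen R (W ⧸ (B ⊔ A)) :=
    flen_congr (Submodule.quotientQuotientEquivQuotientSup B A)
  have h3 : flen R (Submodule.map B.mkQ A) ≤ flen R A := by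
    have e : Submodule.map B.mkQ A = LinearMap.range (B.mkQ.comp A.subtype) := by
      rw [LinearMap.range_comp, Submodule.range_subtype]
    have hs := flen_le_of_surjective (R := R) (P := A)
      (LinearMap.rangeRestrict (B.mkQ.comp A.subtype)) (LinearMap.surjective_rangeRestrict _)
    calc flen R (Submodule.map B.mkQ A)
        = flen R (LinearMap.range (B.mkQ.comp A.subtype)) := by rw [e]
      _ ≤ flen R A := hs
  have h4 := flen_add (P := W) A
  rw [sup_comm A B]
  omega

end Core

section LocalApp

variable {R : Type*} [CommRing R] [IsLocalRing R] [IsNoetherianRing R]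

lemma isArtinian_of_torsion_max {K : Type*} [AddCommGroup K] [Module R K] [Module.Finite R K]
    (hK : Module.IsTorsionBySet R K (IsLocalRing.maximalIdeal R : Set R)) :
    IsArtinian R K := by
  letI : Module (R ⧸ IsLocalRing.maximalIdeal R) K := hK.module
  haveI : IsScalarTower R (R ⧸ IsLocalRing.maximalIdeal R) K :=
    Module.IsTorsionBySet.isScalarTower hK
  haveI : Module.Finite (R ⧸ IsLocalRing.maximalIdeal R) K :=
    Module.Finite.of_restrictScalars_finite R _ _
  haveI : IsArtinianRing (R ⧸ IsLocalRing.maximalIdeal R) := by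
    letI := Ideal.Quotient.field (IsLocalRing.maximalIdeal R)
    exact inferInstance
  haveI hart : IsArtinian (R ⧸ IsLocalRing.maximalIdeal R) K := isArtinian_of_fg_of_artinian'
  rw [isArtinian_iff]
  have hf : ∀ N : Submodule R K, ∃ N' : Submodule (R ⧸ IsLocalRing.maximalIdeal R) K,
      ∀ x : K, x ∈ N' ↔ x ∈ N := by
    intro N
    refine ⟨⟨⟨⟨N, ?_⟩, ?_⟩, ?_⟩, fun x => Iff.rfl⟩
    · exact fun h1 h2 => N.add_mem h1 h2
    · exact N.zero_mem
    · rintro ⟨c⟩ x hx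
      exact N.smul_mem c hx
  choose f hfm using hf
  have hstrict : ∀ {A B : Submodule R K}, A < B → f A < f B := by
    intro A B hAB
    rw [lt_iff_le_and_ne] at hAB ⊢
    refine ⟨fun x hx => (hfm B x).mpr (hAB.1 ((hfm A x).mp hx)), fun he => hAB.2 ?_⟩
    ext x
    rw [← hfm A x, ← hfm B x, he]
  exact Subrelation.wf (fun {A B} h => hstrict h) (InvImage.wf f (IsWellFounded.wf))

variable {M : Type*} [AddCommGroup M] [Module R M] [Module.Finite R M]

lemma artinian_quot_pow_max (c : ℕ) :
    IsArtinian R (M ⧸ ((IsLocalRing.maximalIdeal R ^ c) • (⊤ : Submodule R M))) := by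
  induction c with
  | zero =>
      haveI : Subsingleton
          (M ⧸ ((IsLocalRing.maximalIdeal R ^ 0) • (⊤ : Submodule R M))) := by
        rw [Submodule.Quotient.subsingleton_iff, pow_zero, Ideal.one_eq_top,
          Submodule.top_smul]
      exact isArtinian_of_finite
  | succ c ih =>
      set m := IsLocalRing.maximalIdeal R with hm
      set S := (m ^ (c + 1)) • (⊤ : Submodule R M) with hS
      set N := Submodule.map S.mkQ ((m ^ c) • (⊤ : Submodule R M)) with hN
      haveI : IsNoetherian R M := isNoetherian_of_isNoetherianRing_of_finite R M
      apply (isArtinian_iff_submodule_quotient N).mpr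
      constructor
      · haveI : Module.Finite R N := Module.Finite.iff_fg.mpr (IsNoetherian.noetherian N)
        apply isArtinian_of_torsion_max
        rintro ⟨x, hx⟩ ⟨a, ha⟩
        obtain ⟨y, hy, rfl⟩ := Submodule.mem_map.mp hx
        apply Subtype.ext
        show a • (S.mkQ y) = 0
        rw [← map_smul, Submodule.mkQ_apply, Submodule.Quotient.mk_eq_zero]
        have : a • y ∈ m • ((m ^ c) • (⊤ : Submodule R M)) := Submodule.smul_mem_smul ha hy
        rwa [← Submodule.smul_assoc, Ideal.smul_eq_mul, ← pow_succ'] at this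
      · have hle : S ≤ (m ^ c) • (⊤ : Submodule R M) :=
          Submodule.smul_mono_left (Ideal.pow_le_pow_right (by omega))
        haveI := ih
        exact isArtinian_of_linearEquiv
          (Submodule.quotientQuotientEquivQuotient S ((m ^ c) • ⊤) hle).symm

lemma artinian_quot (K : Ideal R) (h : ∃ c, (IsLocalRing.maximalIdeal R) ^ c ≤ K) :
    IsArtinian R (M ⧸ K • (⊤ : Submodule R M)) := by
  obtain ⟨c, hc⟩ := h
  have hle : (IsLocalRing.maximalIdeal R ^ c) • (⊤ : Submodule R M) ≤ K • ⊤ :=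
    Submodule.smul_mono_left hc
  haveI := artinian_quot_pow_max (R := R) (M := M) c
  set g := Submodule.liftQ ((IsLocalRing.maximalIdeal R ^ c) • (⊤ : Submodule R M))
    (K • (⊤ : Submodule R M)).mkQ (by rwa [Submodule.ker_mkQ]) with hg
  have hsurj : Function.Surjective g := by
    intro z
    obtain ⟨x, rfl⟩ := (K • (⊤ : Submodule R M)).mkQ_surjective z
    exact ⟨Submodule.Quotient.mk x, by simp [hg]⟩
  exact isArtinian_of_surjective _ g hsurj

end LocalApp
section QLen

variable {R : Type*} [CommRing R] [IsLocalRing R] [IsNoetherianRing R]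
  {M : Type*} [AddCommGroup M] [Module R M] [Module.Finite R M]

/-- `qlen R M K` : natural-number length of `M ⧸ K M`. -/
noncomputable def qlen (R M : Type*) [CommRing R] [AddCommGroup M] [Module R M]
    (K : Ideal R) : ℕ :=
  flen R (M ⧸ K • (⊤ : Submodule R M))

omit [IsLocalRing R] [IsNoetherianRing R] [Module.Finite R M] in
lemma quotLen_eq (K : Ideal R) : quotLen R M K = (qlen R M K : ℝ) := rfl

lemma qlen_anti (K K' : Ideal R) (h : K ≤ K')
    (hfin : ∃ c, (IsLocalRing.maximalIdeal R) ^ c ≤ K) :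
    qlen R M K' ≤ qlen R M K := by
  haveI : IsNoetherian R M := isNoetherian_of_isNoetherianRing_of_finite R M
  haveI := artinian_quot (M := M) K hfin
  set g := Submodule.liftQ (K • (⊤ : Submodule R M)) (K' • (⊤ : Submodule R M)).mkQ
    (by rw [Submodule.ker_mkQ]; exact Submodule.smul_mono_left h) with hg
  have hsurj : Function.Surjective g := by
    intro z
    obtain ⟨x, rfl⟩ := (K' • (⊤ : Submodule R M)).mkQ_surjective z
    exact ⟨Submodule.Quotient.mk x, by simp [hg]⟩
  exact flen_le_of_surjective g hsurj

lemma qlen_ineq (A B A' : Ideal R) (h1 : A' ≤ A) (h2 : A' ≤ B)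
    (hfin : ∃ c, (IsLocalRing.maximalIdeal R) ^ c ≤ A') :
    qlen R M B + qlen R M A ≤ qlen R M (A + B) + qlen R M A' := by
  haveI : IsNoetherian R M := isNoetherian_of_isNoetherianRing_of_finite R M
  haveI := artinian_quot (M := M) A' hfin
  set W := M ⧸ A' • (⊤ : Submodule R M) with hW
  set mk := (A' • (⊤ : Submodule R M)).mkQ with hmk
  set Ab := Submodule.map mk (A • (⊤ : Submodule R M)) with hAb
  set Bb := Submodule.map mk (B • (⊤ : Submodule R M)) with hBb
  have eB : qlen R M B = flen R (W ⧸ Bb) :=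
    (flen_congr (Submodule.quotientQuotientEquivQuotient
      (A' • (⊤ : Submodule R M)) (B • (⊤ : Submodule R M))
      (Submodule.smul_mono_left h2))).symm
  have eA : qlen R M A = flen R (W ⧸ Ab) :=
    (flen_congr (Submodule.quotientQuotientEquivQuotient
      (A' • (⊤ : Submodule R M)) (A • (⊤ : Submodule R M))
      (Submodule.smul_mono_left h1))).symm
  have habs : (A + B) • (⊤ : Submodule R M) = A • ⊤ ⊔ B • ⊤ := by
    rw [Ideal.add_eq_sup, Submodule.sup_smul]
  have hmap : Submodule.map mk ((A + B) • (⊤ : Submodule R M)) = Ab ⊔ Bb := by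
    rw [habs, Submodule.map_sup]
  have eAB : qlen R M (A + B) = flen R (W ⧸ (Ab ⊔ Bb)) := by
    rw [← hmap]
    exact (flen_congr (Submodule.quotientQuotientEquivQuotient
      (A' • (⊤ : Submodule R M)) ((A + B) • (⊤ : Submodule R M))
      (Submodule.smul_mono_left (h1.trans (Ideal.add_eq_sup (I := A) (J := B) ▸
        le_sup_left))))).symm
  have eA' : qlen R M A' = flen R W := rfl
  have key := flen_quot_ineq (R := R) (W := W) Ab Bb
  omega

end QLen

section KeyLim

open Filter

lemma keylim {P : ℝ} (hP : 1 < P) (d : ℕ) (eI : ℝ) (L : ℕ → ℝ)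
    (heI : Tendsto (fun n : ℕ => (d.factorial : ℝ) * L n / (n : ℝ) ^ d) atTop (nhds eI))
    (k : ℕ → ℕ) (t : ℝ) (ht : 0 < t)
    (hk : Tendsto (fun e : ℕ => (k e : ℝ) / P ^ e) atTop (nhds t)) :
    Tendsto (fun e : ℕ => L (k e) / P ^ (e * d)) atTop
      (nhds (t ^ d / d.factorial * eI)) := by
  have hPpos : (0 : ℝ) < P := lt_trans one_pos hP
  have hPe : Tendsto (fun e : ℕ => P ^ e) atTop atTop :=
    tendsto_pow_atTop_atTop_of_one_lt hP
  have hkR : Tendsto (fun e : ℕ => (k e : ℝ)) atTop atTop := by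
    have h := Tendsto.pos_mul_atTop ht hk hPe
    refine h.congr fun e => ?_
    field_simp
  have hkN : Tendsto k atTop atTop := tendsto_natCast_atTop_iff.mp hkR
  have h1 : Tendsto (fun e => (d.factorial : ℝ) * L (k e) / (k e : ℝ) ^ d)
      atTop (nhds eI) := heI.comp hkN
  have h2 : Tendsto (fun e => ((k e : ℝ) / P ^ e) ^ d) atTop (nhds (t ^ d)) := hk.pow d
  have h3 : Tendsto (fun e =>
      ((d.factorial : ℝ) * L (k e) / (k e : ℝ) ^ d) * ((k e : ℝ) / P ^ e) ^ d
        / (d.factorial : ℝ)) atTop (nhds (eI * t ^ d / d.factorial)) :=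
    (h1.mul h2).div_const _
  have heq : ∀ᶠ e in atTop,
      ((d.factorial : ℝ) * L (k e) / (k e : ℝ) ^ d) * ((k e : ℝ) / P ^ e) ^ d
        / (d.factorial : ℝ) = L (k e) / P ^ (e * d) := by
    filter_upwards [hkN.eventually_ge_atTop 1] with e he
    have hk0 : (k e : ℝ) ≠ 0 := Nat.cast_ne_zero.mpr (by omega)
    have hpe0 : (P : ℝ) ^ e ≠ 0 := pow_ne_zero _ hPpos.ne'
    have hfac : (d.factorial : ℝ) ≠ 0 := Nat.cast_ne_zero.mpr d.factorial_ne_zero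
    rw [pow_mul, div_pow]
    field_simp
  have hfinal := h3.congr' heq
  rwa [show eI * t ^ d / (d.factorial : ℝ) = t ^ d / d.factorial * eI from by ring] at hfinal

end KeyLim

theorem h_eq_at_thresholds
    {R M : Type*} [CommRing R] [IsLocalRing R] [IsNoetherianRing R]
    [AddCommGroup M] [Module R M] [Module.Finite R M]
    (p : ℕ) [Fact p.Prime] [CharP R p]
    (d : ℕ) (hd : 1 ≤ d) (hdim : ringKrullDim R = d)
    (I J : Ideal R)
    (hI : I.radical = IsLocalRing.maximalIdeal R)
    (hJ : J.radical = IsLocalRing.maximalIdeal R)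
    (s : ℝ) (hs : 0 < s)
    (eI eHK h sJI cJI : ℝ)
    (heI : Tendsto (fun n : ℕ => (d.factorial : ℝ) * quotLen R M (I ^ n) / (n : ℝ) ^ d)
      atTop (nhds eI))
    (heHK : Tendsto (fun e : ℕ => quotLen R M (frobPow J (p ^ e)) / (p : ℝ) ^ (e * d))
      atTop (nhds eHK))
    (hh : Tendsto (fun e : ℕ =>
        quotLen R M (I ^ (⌈s * (p : ℝ) ^ e⌉.toNat) + frobPow J (p ^ e)) /
          (p : ℝ) ^ (e * d))
      atTop (nhds h))
    (hsJI : Tendsto (fun e : ℕ =>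
        ((sInf {n : ℕ | ¬ frobPow J (p ^ e) ≤ I ^ n} : ℕ) : ℝ) / (p : ℝ) ^ e)
      atTop (nhds sJI))
    (hcJI : Tendsto (fun e : ℕ =>
        ((sSup {n : ℕ | ¬ I ^ n ≤ frobPow J (p ^ e)} : ℕ) : ℝ) / (p : ℝ) ^ e)
      atTop (nhds cJI)) :
    (s ≤ sJI → h = s ^ d / d.factorial * eI) ∧ (cJI ≤ s → h = eHK) := by
  classical
  haveI : IsNoetherian R M := isNoetherian_of_isNoetherianRing_of_finite R M
  have hP1 : (1 : ℝ) < (p : ℝ) := by exact_mod_cast (Fact.out : p.Prime).one_lt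
  have hPpos : (0 : ℝ) < (p : ℝ) := lt_trans one_pos hP1
  have hpe_pos : ∀ e : ℕ, (0 : ℝ) < (p : ℝ) ^ e := fun e => pow_pos hPpos e
  have hped_pos : ∀ e : ℕ, (0 : ℝ) < (p : ℝ) ^ (e * d) := fun e => pow_pos hPpos _
  have hinv : Tendsto (fun e : ℕ => ((p : ℝ) ^ e)⁻¹) atTop (nhds 0) :=
    (tendsto_pow_atTop_atTop_of_one_lt hP1).inv_tendsto_atTop
  -- m-primary data
  have hmfg : (IsLocalRing.maximalIdeal R).FG := IsNoetherian.noetherian _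
  obtain ⟨a, hma⟩ : ∃ a, (IsLocalRing.maximalIdeal R) ^ a ≤ I :=
    Ideal.exists_pow_le_of_le_radical_of_fg hI.ge hmfg
  have hIm : ∀ n, (IsLocalRing.maximalIdeal R) ^ (a * n) ≤ I ^ n := fun n => by
    rw [pow_mul]; exact Ideal.pow_right_mono hma n
  have hfrobrad : ∀ e : ℕ, IsLocalRing.maximalIdeal R ≤ (frobPow J (p ^ e)).radical := by
    intro e
    have hJF : J ≤ (frobPow J (p ^ e)).radical := fun x hx =>
      ⟨p ^ e, Ideal.subset_span ⟨x, hx, rfl⟩⟩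
    calc IsLocalRing.maximalIdeal R = J.radical := hJ.symm
      _ ≤ (frobPow J (p ^ e)).radical.radical := Ideal.radical_mono hJF
      _ = (frobPow J (p ^ e)).radical := Ideal.radical_idem _
  have hfrobfin : ∀ e : ℕ, ∃ c, (IsLocalRing.maximalIdeal R) ^ c ≤ frobPow J (p ^ e) :=
    fun e => Ideal.exists_pow_le_of_le_radical_of_fg (hfrobrad e) hmfg
  -- the ceiling sequence
  set nc : ℕ → ℕ := fun e => (⌈s * (p : ℝ) ^ e⌉).toNat with hnc
  have hncpos : ∀ e, (0 : ℤ) < ⌈s * (p : ℝ) ^ e⌉ := fun e =>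
    Int.ceil_pos.mpr (mul_pos hs (hpe_pos e))
  have hncc : ∀ e, ((nc e : ℕ) : ℝ) = ((⌈s * (p : ℝ) ^ e⌉ : ℤ) : ℝ) := fun e => by
    rw [hnc]
    exact_mod_cast congrArg (fun z : ℤ => (z : ℝ)) (Int.toNat_of_nonneg (hncpos e).le)
  have hnlim : Tendsto (fun e : ℕ => ((nc e : ℕ) : ℝ) / (p : ℝ) ^ e) atTop (nhds s) := by
    have hupper : Tendsto (fun e : ℕ => s + ((p : ℝ) ^ e)⁻¹) atTop (nhds s) := by
      have h0 := Tendsto.add (tendsto_const_nhds : Tendsto (fun _ : ℕ => s) atTop (nhds s)) hinv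
      rwa [add_zero] at h0
    refine tendsto_of_tendsto_of_tendsto_of_le_of_le' (tendsto_const_nhds) hupper ?_ ?_
    · filter_upwards with e
      rw [hncc e, le_div_iff₀ (hpe_pos e)]
      exact Int.le_ceil _
    · filter_upwards with e
      rw [hncc e, div_le_iff₀ (hpe_pos e)]
      have h1 : ((⌈s * (p : ℝ) ^ e⌉ : ℤ) : ℝ) < s * (p : ℝ) ^ e + 1 := Int.ceil_lt_add_one _
      have h2 : (s + ((p : ℝ) ^ e)⁻¹) * (p : ℝ) ^ e = s * (p : ℝ) ^ e + 1 := by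
        field_simp
      linarith
  -- restated limit hypotheses (definitional)
  have hh2 : Tendsto (fun e : ℕ =>
      quotLen R M (I ^ nc e + frobPow J (p ^ e)) / (p : ℝ) ^ (e * d))
      atTop (nhds h) := hh
  -- helpers for min/max of quotients
  have hdivmin : ∀ (x y c : ℝ), 0 < c → min x y / c = min (x / c) (y / c) := by
    intro x y c hc
    rcases le_total x y with hxy | hxy
    · rw [min_eq_left hxy, min_eq_left ((div_le_div_iff_of_pos_right hc).mpr hxy)]
    · rw [min_eq_right hxy, min_eq_right ((div_le_div_iff_of_pos_right hc).mpr hxy)]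
  have hdivmax : ∀ (x y c : ℝ), 0 < c → max x y / c = max (x / c) (y / c) := by
    intro x y c hc
    rcases le_total x y with hxy | hxy
    · rw [max_eq_right hxy, max_eq_right ((div_le_div_iff_of_pos_right hc).mpr hxy)]
    · rw [max_eq_left hxy, max_eq_left ((div_le_div_iff_of_pos_right hc).mpr hxy)]
  constructor
  · -- case s ≤ sJI
    intro hs1
    have hupper_lim := keylim hP1 d eI (fun n => quotLen R M (I ^ n)) heI nc s hs hnlim
    have hle1 : h ≤ s ^ d / d.factorial * eI := by
      refine le_of_tendsto_of_tendsto' hh2 hupper_lim fun e => ?_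
      refine (div_le_div_iff_of_pos_right (hped_pos e)).mpr ?_
      simp only [quotLen_eq]
      exact_mod_cast qlen_anti (I ^ nc e) (I ^ nc e + frobPow J (p ^ e))
        (by rw [Ideal.add_eq_sup]; exact le_sup_left) ⟨a * nc e, hIm _⟩
    set Mu : ℕ → ℕ := fun e => sInf {n : ℕ | ¬ frobPow J (p ^ e) ≤ I ^ n} with hMu
    have hMulim : Tendsto (fun e : ℕ => ((Mu e : ℕ) : ℝ) / (p : ℝ) ^ e)
      atTop (nhds sJI) := hsJI
    set kk : ℕ → ℕ := fun e => min (nc e) (Mu e - 1) with hkk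
    have hfrle : ∀ e, frobPow J (p ^ e) ≤ I ^ kk e := by
      intro e
      rcases Nat.eq_zero_or_pos (Mu e) with h0 | h0
      · have hz : kk e = 0 := by simp [hkk, h0]
        rw [hz, pow_zero, Ideal.one_eq_top]
        exact le_top
      · have hlt : kk e < Mu e := by
          have : kk e ≤ Mu e - 1 := min_le_right _ _
          omega
        have hnm := Nat.notMem_of_lt_sInf (s := {n : ℕ | ¬ frobPow J (p ^ e) ≤ I ^ n}) hlt
        simpa using hnm
    have hlb : ∀ e, quotLen R M (I ^ kk e) ≤
        quotLen R M (I ^ nc e + frobPow J (p ^ e)) := by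
      intro e
      simp only [quotLen_eq]
      have hsum_le : I ^ nc e + frobPow J (p ^ e) ≤ I ^ kk e := by
        rw [Ideal.add_eq_sup]
        exact sup_le (Ideal.pow_le_pow_right (min_le_left _ _)) (hfrle e)
      exact_mod_cast qlen_anti (I ^ nc e + frobPow J (p ^ e)) (I ^ kk e) hsum_le
        ⟨a * nc e, (hIm _).trans (by rw [Ideal.add_eq_sup]; exact le_sup_left)⟩
    have hmu1lim : Tendsto (fun e : ℕ => ((Mu e - 1 : ℕ) : ℝ) / (p : ℝ) ^ e)
        atTop (nhds sJI) := by
      have hlow : Tendsto (fun e : ℕ => ((Mu e : ℕ) : ℝ) / (p : ℝ) ^ e - ((p : ℝ) ^ e)⁻¹)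
          atTop (nhds sJI) := by
        have := hMulim.sub hinv
        simpa using this
      refine tendsto_of_tendsto_of_tendsto_of_le_of_le' hlow hMulim ?_ ?_
      · filter_upwards with e
        have hge : ((Mu e : ℕ) : ℝ) - 1 ≤ ((Mu e - 1 : ℕ) : ℝ) := by
          rcases Nat.eq_zero_or_pos (Mu e) with h0 | h0
          · simp [h0]
          · have : ((Mu e - 1 : ℕ) : ℝ) = (Mu e : ℝ) - 1 := by
              push_cast [Nat.cast_sub h0]
              ring
            rw [this]
        have : ((Mu e : ℕ) : ℝ) / (p : ℝ) ^ e - ((p : ℝ) ^ e)⁻¹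
            = (((Mu e : ℕ) : ℝ) - 1) / (p : ℝ) ^ e := by
          field_simp
        rw [this]
        exact (div_le_div_iff_of_pos_right (hpe_pos e)).mpr hge
      · filter_upwards with e
        exact (div_le_div_iff_of_pos_right (hpe_pos e)).mpr (Nat.cast_le.mpr (Nat.sub_le _ _))
    have hkklim : Tendsto (fun e : ℕ => ((kk e : ℕ) : ℝ) / (p : ℝ) ^ e) atTop (nhds s) := by
      have hmin := hnlim.min hmu1lim
      rw [min_eq_left hs1] at hmin
      refine hmin.congr fun e => ?_
      rw [hkk]
      simp only
      rw [Nat.cast_min, hdivmin _ _ _ (hpe_pos e)]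
    have hlower_lim := keylim hP1 d eI (fun n => quotLen R M (I ^ n)) heI kk s hs hkklim
    have hge1 : s ^ d / d.factorial * eI ≤ h := by
      refine le_of_tendsto_of_tendsto' hlower_lim hh2 fun e => ?_
      exact (div_le_div_iff_of_pos_right (hped_pos e)).mpr (hlb e)
    linarith
  · -- case cJI ≤ s
    intro hs2
    have hle2 : h ≤ eHK := by
      refine le_of_tendsto_of_tendsto' hh2 heHK fun e => ?_
      refine (div_le_div_iff_of_pos_right (hped_pos e)).mpr ?_
      simp only [quotLen_eq]
      exact_mod_cast qlen_anti (frobPow J (p ^ e)) (I ^ nc e + frobPow J (p ^ e))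
        (by rw [Ideal.add_eq_sup]; exact le_sup_right) (hfrobfin e)
    set Nu : ℕ → ℕ := fun e => sSup {n : ℕ | ¬ I ^ n ≤ frobPow J (p ^ e)} with hNu
    have hNulim : Tendsto (fun e : ℕ => ((Nu e : ℕ) : ℝ) / (p : ℝ) ^ e)
      atTop (nhds cJI) := hcJI
    set n' : ℕ → ℕ := fun e => max (nc e) (Nu e + 1) with hn'
    have hbdd : ∀ e, BddAbove {n : ℕ | ¬ I ^ n ≤ frobPow J (p ^ e)} := by
      intro e
      obtain ⟨c, hc⟩ := hfrobfin e
      refine ⟨c, fun n hn => ?_⟩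
      by_contra hcn
      push_neg at hcn
      apply hn
      calc I ^ n ≤ (IsLocalRing.maximalIdeal R) ^ n :=
            Ideal.pow_right_mono (hI ▸ Ideal.le_radical) n
        _ ≤ (IsLocalRing.maximalIdeal R) ^ c := Ideal.pow_le_pow_right hcn.le
        _ ≤ frobPow J (p ^ e) := hc
    have hIn' : ∀ e, I ^ n' e ≤ frobPow J (p ^ e) := by
      intro e
      by_contra hcon
      have hmem : n' e ∈ {n : ℕ | ¬ I ^ n ≤ frobPow J (p ^ e)} := hcon
      have hle : n' e ≤ Nu e := le_csSup (hbdd e) hmem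
      have : Nu e + 1 ≤ n' e := le_max_right _ _
      omega
    have hkey : ∀ e, qlen R M (frobPow J (p ^ e)) + qlen R M (I ^ nc e) ≤
        qlen R M (I ^ nc e + frobPow J (p ^ e)) + qlen R M (I ^ n' e) := by
      intro e
      have := qlen_ineq (M := M) (I ^ nc e) (frobPow J (p ^ e)) (I ^ n' e)
        (Ideal.pow_le_pow_right (le_max_left _ _)) (hIn' e) ⟨a * n' e, hIm _⟩
      linarith [this]
    have hnu1lim : Tendsto (fun e : ℕ => ((Nu e + 1 : ℕ) : ℝ) / (p : ℝ) ^ e)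
        atTop (nhds cJI) := by
      have := hNulim.add hinv
      rw [add_zero] at this
      refine this.congr fun e => ?_
      push_cast
      rw [add_div]
      congr 1
      exact (one_div _).symm
    have hn'lim : Tendsto (fun e : ℕ => ((n' e : ℕ) : ℝ) / (p : ℝ) ^ e) atTop (nhds s) := by
      have hmax := hnlim.max hnu1lim
      rw [max_eq_left hs2] at hmax
      refine hmax.congr fun e => ?_
      rw [hn']
      simp only
      rw [Nat.cast_max, hdivmax _ _ _ (hpe_pos e)]
    have hn'keylim := keylim hP1 d eI (fun n => quotLen R M (I ^ n)) heI n' s hs hn'lim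
    have hnckeylim := keylim hP1 d eI (fun n => quotLen R M (I ^ n)) heI nc s hs hnlim
    have hglim : Tendsto (fun e : ℕ =>
        quotLen R M (frobPow J (p ^ e)) / (p : ℝ) ^ (e * d)
          + quotLen R M (I ^ nc e) / (p : ℝ) ^ (e * d)
          - quotLen R M (I ^ n' e) / (p : ℝ) ^ (e * d)) atTop (nhds eHK) := by
      have := (heHK.add hnckeylim).sub hn'keylim
      rwa [add_sub_cancel_right] at this
    have hge2 : eHK ≤ h := by
      refine le_of_tendsto_of_tendsto' hglim hh2 fun e => ?_
      have hq := hkey e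
      have hcast : (qlen R M (frobPow J (p ^ e)) : ℝ) + (qlen R M (I ^ nc e) : ℝ) ≤
          (qlen R M (I ^ nc e + frobPow J (p ^ e)) : ℝ) + (qlen R M (I ^ n' e) : ℝ) := by
        exact_mod_cast hq
      simp only [quotLen_eq]
      have hQ : (0 : ℝ) < (p : ℝ) ^ (e * d) := hped_pos e
      have hdd : ((qlen R M (frobPow J (p ^ e)) : ℝ) + (qlen R M (I ^ nc e) : ℝ)
          - (qlen R M (I ^ n' e) : ℝ)) / (p : ℝ) ^ (e * d) ≤
          (qlen R M (I ^ nc e + frobPow J (p ^ e)) : ℝ) / (p : ℝ) ^ (e * d) :=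
        (div_le_div_iff_of_pos_right hQ).mpr (by linarith)
      have hsplit : ((qlen R M (frobPow J (p ^ e)) : ℝ) + (qlen R M (I ^ nc e) : ℝ)
          - (qlen R M (I ^ n' e) : ℝ)) / (p : ℝ) ^ (e * d)
          = (qlen R M (frobPow J (p ^ e)) : ℝ) / (p : ℝ) ^ (e * d)
            + (qlen R M (I ^ nc e) : ℝ) / (p : ℝ) ^ (e * d)
            - (qlen R M (I ^ n' e) : ℝ) / (p : ℝ) ^ (e * d) := by ring
      linarith
    linarith
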